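/- Let κ > 0, φ > 0, ν > 2, b ∈ ℝ and B ∈ ℝ². Then for every h ∈ ℝ² with h ≠ 0, b·C_κ^ν(h) − Σ_{i=1}^2 Σ_{j=1}^2 B_i B_j · ∂²C_κ^ν/∂h_i∂h_j (h) = b·C_κ^ν(h) + (⟨B,B⟩/(2ν))·C_κ^{ν−1}(h) − (⟨B,h⟩²/(4ν(ν−1)))·C_κ^{ν−2}(h). (This is the covariance function of Example 2, i.e. of the field generated by the simplest nested SPDE (κ²−Δ)^{α/2}X = (b + B^⊤∇)𝒲 in ℝ², obtained by applying the operator b − ∇^⊤BB^⊤∇ to the Matérn covariance.) -/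

import Mathlib

open Real

/-- The modified Bessel function of the second kind,
`K_ν(x) = ∫₀^∞ exp(−x cosh t) cosh(νt) dt`. -/
noncomputable def besselK (ν x : ℝ) : ℝ :=
  ∫ t in Set.Ioi (0 : ℝ), Real.exp (-x * Real.cosh t) * Real.cosh (ν * t)

/-- The Matérn covariance function on `ℝ²` with scale `κ`, variance parameter `φ²` and
shape parameter `ν`:
`C_κ^ν(h) = (2^{1−ν}φ²/(4π Γ(ν+1) κ^{2ν})) (κ‖h‖)^ν K_ν(κ‖h‖)`. -/
noncomputable def matern (κ φ ν : ℝ) (h : EuclideanSpace ℝ (Fin 2)) : ℝ :=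
  2 ^ (1 - ν) * φ ^ 2 / (4 * π * Real.Gamma (ν + 1) * κ ^ (2 * ν)) *
    (κ * ‖h‖) ^ ν * besselK ν (κ * ‖h‖)

/-- The partial derivative of `g : ℝ² → ℝ` in the `i`-th coordinate direction. -/
noncomputable def pderiv2 (i : Fin 2) (g : EuclideanSpace ℝ (Fin 2) → ℝ) :
    EuclideanSpace ℝ (Fin 2) → ℝ :=
  fun x => fderiv ℝ g x (EuclideanSpace.single i 1)

open MeasureTheory

lemma cosh_quad_le (t : ℝ) (ht : 0 ≤ t) : 1 + t ^ 2 / 2 ≤ Real.cosh t := by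
  have h1 : Real.cosh t = 1 + 2 * Real.sinh (t / 2) ^ 2 := by
    have := Real.cosh_two_mul (t / 2)
    have h2 := Real.cosh_sq (t / 2)
    rw [show 2 * (t / 2) = t by ring] at this
    rw [this, h2]; ring
  have h3 : t / 2 ≤ Real.sinh (t / 2) := Real.self_le_sinh_iff.mpr (by linarith)
  nlinarith [Real.sinh_nonneg_iff.mpr (show (0:ℝ) ≤ t/2 by linarith)]

lemma cosh_le_exp_abs (y : ℝ) : Real.cosh y ≤ Real.exp |y| := by
  rw [← Real.cosh_abs]
  nlinarith [Real.sinh_nonneg_iff.mpr (abs_nonneg y), Real.cosh_add_sinh |y|]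

lemma abs_sinh_le_exp_abs (y : ℝ) : |Real.sinh y| ≤ Real.exp |y| := by
  rw [Real.abs_sinh]
  nlinarith [cosh_le_exp_abs y, Real.sinh_le_sinh.mpr (le_abs_self y),
    Real.cosh_add_sinh |y|, Real.one_le_cosh |y|]

lemma integrable_gauss_lin (b c : ℝ) (hb : 0 < b) :
    Integrable (fun t : ℝ => Real.exp (-b * t ^ 2 + c * t)) := by
  have : (fun t : ℝ => Real.exp (-b * t ^ 2 + c * t))
      = fun t : ℝ => Real.exp (c ^ 2 / (4 * b)) * Real.exp (-b * (t - c / (2 * b)) ^ 2) := by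
    funext t
    rw [← Real.exp_add]
    congr 1
    field_simp
    ring
  rw [this]
  exact ((integrable_exp_neg_mul_sq hb).comp_sub_right (c / (2 * b))).const_mul _

/-- The integrand of `besselK` is integrable on `(0,∞)` (indeed on all of `ℝ`). -/
lemma integrableK (x μ : ℝ) (hx : 0 < x) :
    Integrable (fun t : ℝ => Real.exp (-x * Real.cosh t) * Real.cosh (μ * t)) := by
  have hbound : ∀ t : ℝ, ‖Real.exp (-x * Real.cosh t) * Real.cosh (μ * t)‖
      ≤ (1/2) * Real.exp (-x) * (Real.exp (-(x/2) * t ^ 2 + μ * t)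
        + Real.exp (-(x/2) * t ^ 2 + (-μ) * t)) := by
    intro t
    have h1 : 1 + t ^ 2 / 2 ≤ Real.cosh t := by
      rw [← Real.cosh_abs]
      have := cosh_quad_le |t| (abs_nonneg t)
      calc 1 + t ^ 2 / 2 = 1 + |t| ^ 2 / 2 := by rw [sq_abs]
        _ ≤ _ := this
    have he : Real.exp (-x * Real.cosh t) ≤ Real.exp (-x - (x/2) * t ^ 2) :=
      Real.exp_le_exp.mpr (by nlinarith)
    have hc : Real.cosh (μ * t) = (Real.exp (μ * t) + Real.exp (-(μ * t))) / 2 :=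
      Real.cosh_eq _
    rw [Real.norm_eq_abs, abs_of_nonneg (by positivity : (0:ℝ) ≤ _)]
    have hpos : (0:ℝ) < Real.cosh (μ * t) := Real.cosh_pos _
    calc Real.exp (-x * Real.cosh t) * Real.cosh (μ * t)
        ≤ Real.exp (-x - (x/2) * t ^ 2) * ((Real.exp (μ * t) + Real.exp (-(μ * t))) / 2) := by
          rw [hc] at *; exact mul_le_mul_of_nonneg_right he (by positivity)
      _ = (1/2) * Real.exp (-x) * (Real.exp (-(x/2) * t ^ 2 + μ * t)
        + Real.exp (-(x/2) * t ^ 2 + (-μ) * t)) := by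
          rw [show -x - x/2 * t ^ 2 = (-(x/2) * t^2) + (-x) by ring, Real.exp_add,
            Real.exp_add, Real.exp_add, show -(μ*t) = (-μ)*t by ring]
          ring
  refine Integrable.mono' ?_ ?_ (Filter.Eventually.of_forall hbound)
  · exact (((integrable_gauss_lin (x/2) μ (by linarith)).add
      (integrable_gauss_lin (x/2) (-μ) (by linarith))).const_mul _)
  · exact ((Real.continuous_exp.comp (continuous_const.mul Real.continuous_cosh)).mul
      (Real.continuous_cosh.comp (continuous_const.mul continuous_id))).aestronglyMeasurable

lemma cosh_mul_cosh' (a b : ℝ) :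
    Real.cosh a * Real.cosh b = (Real.cosh (a + b) + Real.cosh (a - b)) / 2 := by
  rw [Real.cosh_add, Real.cosh_sub]; ring

lemma sinh_mul_sinh' (a b : ℝ) :
    Real.sinh a * Real.sinh b = (Real.cosh (a + b) - Real.cosh (a - b)) / 2 := by
  rw [Real.cosh_add, Real.cosh_sub]; ring

lemma hasDerivAt_besselK (ν x : ℝ) (hx : 0 < x) :
    HasDerivAt (besselK ν) (-((besselK (ν - 1) x + besselK (ν + 1) x) / 2)) x := by
  have key := hasDerivAt_integral_of_dominated_loc_of_deriv_le (μ := volume.restrict (Set.Ioi 0))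
    (x₀ := x) (s := Metric.ball x (x / 2)) (Metric.ball_mem_nhds _ (by linarith))
    (F := fun y t => Real.exp (-y * Real.cosh t) * Real.cosh (ν * t))
    (F' := fun y t => -(Real.cosh t * Real.exp (-y * Real.cosh t) * Real.cosh (ν * t)))
    (bound := fun t => Real.cosh t * Real.exp (-(x/2) * Real.cosh t) * Real.cosh (ν * t))
    ?_ ?_ ?_ ?_ ?_ ?_
  · obtain ⟨-, hd⟩ := key
    have heq : (∫ t in Set.Ioi (0:ℝ),
        -(Real.cosh t * Real.exp (-x * Real.cosh t) * Real.cosh (ν * t)))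
        = -((besselK (ν - 1) x + besselK (ν + 1) x) / 2) := by
      rw [MeasureTheory.integral_neg]
      congr 1
      have : ∀ t : ℝ, Real.cosh t * Real.exp (-x * Real.cosh t) * Real.cosh (ν * t)
          = (1/2) * (Real.exp (-x * Real.cosh t) * Real.cosh ((ν+1) * t))
            + (1/2) * (Real.exp (-x * Real.cosh t) * Real.cosh ((ν-1) * t)) := by
        intro t
        have := cosh_mul_cosh' (ν * t) t
        rw [show ν * t + t = (ν+1)*t by ring, show ν * t - t = (ν-1)*t by ring] at this
        linear_combination Real.exp (-x * Real.cosh t) * this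
      rw [MeasureTheory.setIntegral_congr_fun measurableSet_Ioi (fun t _ => this t),
        MeasureTheory.integral_add
          (((integrableK x (ν+1) hx).restrict).const_mul _)
          (((integrableK x (ν-1) hx).restrict).const_mul _),
        MeasureTheory.integral_const_mul, MeasureTheory.integral_const_mul]
      unfold besselK
      ring
    rw [heq] at hd
    exact hd
  · filter_upwards with y
    exact ((Real.continuous_exp.comp (continuous_const.mul Real.continuous_cosh)).mul
      (Real.continuous_cosh.comp (continuous_const.mul continuous_id))).aestronglyMeasurable
  · exact (integrableK x ν hx).restrict
  · exact (((Real.continuous_cosh.mul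
      (Real.continuous_exp.comp (continuous_const.mul Real.continuous_cosh))).mul
      (Real.continuous_cosh.comp (continuous_const.mul continuous_id))).neg).aestronglyMeasurable
  · filter_upwards with t
    intro y hy
    rw [Metric.mem_ball, Real.dist_eq] at hy
    have hy2 : x / 2 ≤ y := by cases abs_lt.mp hy; linarith
    have hch : (0:ℝ) < Real.cosh t := Real.cosh_pos t
    have hcnu : (0:ℝ) < Real.cosh (ν * t) := Real.cosh_pos _
    rw [norm_neg, Real.norm_eq_abs, abs_of_nonneg (by positivity)]
    have : Real.exp (-y * Real.cosh t) ≤ Real.exp (-(x/2) * Real.cosh t) :=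
      Real.exp_le_exp.mpr (by nlinarith)
    exact mul_le_mul_of_nonneg_right (mul_le_mul_of_nonneg_left this hch.le) hcnu.le
  · have : (fun t => Real.cosh t * Real.exp (-(x/2) * Real.cosh t) * Real.cosh (ν * t))
        = fun t => (1/2) * (Real.exp (-(x/2) * Real.cosh t) * Real.cosh ((ν+1) * t))
            + (1/2) * (Real.exp (-(x/2) * Real.cosh t) * Real.cosh ((ν-1) * t)) := by
      funext t
      have := cosh_mul_cosh' (ν * t) t
      rw [show ν * t + t = (ν+1)*t by ring, show ν * t - t = (ν-1)*t by ring] at this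
      linear_combination Real.exp (-(x/2) * Real.cosh t) * this
    rw [this]
    exact (((integrableK (x/2) (ν+1) (by linarith)).restrict.const_mul _).add
      ((integrableK (x/2) (ν-1) (by linarith)).restrict.const_mul _))
  · filter_upwards with t
    intro y _
    have h1 : HasDerivAt (fun y : ℝ => -y * Real.cosh t) (-Real.cosh t) y := by
      simpa using (hasDerivAt_neg y).mul_const (Real.cosh t)
    have h2 := (h1.exp).mul_const (Real.cosh (ν * t))
    exact h2.congr_deriv (by ring)

lemma tendsto_bessel_aux (x ν : ℝ) (hx : 0 < x) :
    Filter.Tendsto (fun t => Real.exp (-x * Real.cosh t) * Real.sinh (ν * t))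
      Filter.atTop (nhds 0) := by
  have hbound : ∀ t : ℝ, 0 ≤ t →
      |Real.exp (-x * Real.cosh t) * Real.sinh (ν * t)|
        ≤ Real.exp (-x + ν ^ 2 / (2 * x)) * Real.exp (-(x/2) * (t - |ν|/x) ^ 2) := by
    intro t ht
    have h1 : 1 + t ^ 2 / 2 ≤ Real.cosh t := cosh_quad_le t ht
    have h2 : |Real.sinh (ν * t)| ≤ Real.exp (|ν| * t) := by
      have := abs_sinh_le_exp_abs (ν * t)
      rwa [abs_mul, abs_of_nonneg ht] at this
    rw [abs_mul, abs_of_nonneg (Real.exp_pos _).le]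
    calc Real.exp (-x * Real.cosh t) * |Real.sinh (ν * t)|
        ≤ Real.exp (-x - (x/2) * t ^ 2) * Real.exp (|ν| * t) := by
          apply mul_le_mul (Real.exp_le_exp.mpr (by nlinarith)) h2 (abs_nonneg _)
            (Real.exp_pos _).le
      _ = Real.exp (-x + ν ^ 2 / (2 * x)) * Real.exp (-(x/2) * (t - |ν|/x) ^ 2) := by
          rw [← Real.exp_add, ← Real.exp_add]
          congr 1
          have : |ν| ^ 2 = ν ^ 2 := sq_abs ν
          field_simp
          ring_nf
          nlinarith [sq_abs ν]
  have htendG : Filter.Tendsto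
      (fun t : ℝ => Real.exp (-x + ν ^ 2 / (2 * x)) * Real.exp (-(x/2) * (t - |ν|/x) ^ 2))
      Filter.atTop (nhds 0) := by
    rw [show (0:ℝ) = Real.exp (-x + ν ^ 2 / (2 * x)) * 0 by ring]
    apply Filter.Tendsto.const_mul
    apply Real.tendsto_exp_atBot.comp
    have h1 : Filter.Tendsto (fun t : ℝ => t - |ν|/x) Filter.atTop Filter.atTop :=
      Filter.tendsto_atTop_add_const_right _ _ Filter.tendsto_id
    have h2 : Filter.Tendsto (fun t : ℝ => (t - |ν|/x) ^ 2) Filter.atTop Filter.atTop := by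
      simpa [pow_two] using h1.atTop_mul_atTop₀ h1
    have h3 := h2.const_mul_atTop (show (0:ℝ) < x/2 by linarith)
    simpa [Function.comp, neg_mul] using h3
  have : Filter.Tendsto
      (fun t : ℝ => |Real.exp (-x * Real.cosh t) * Real.sinh (ν * t)|)
      Filter.atTop (nhds 0) := by
    apply squeeze_zero' (Filter.Eventually.of_forall (fun t => abs_nonneg _))
      (Filter.eventually_atTop.mpr ⟨0, hbound⟩) htendG
  exact (tendsto_zero_iff_abs_tendsto_zero _).mpr this

lemma besselK_recurrence (ν x : ℝ) (hx : 0 < x) :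
    besselK (ν + 1) x - besselK (ν - 1) x = 2 * ν / x * besselK ν x := by
  set f : ℝ → ℝ := fun t => Real.exp (-x * Real.cosh t) * Real.sinh (ν * t) with hfdef
  set f' : ℝ → ℝ := fun t =>
    (-x/2) * (Real.exp (-x * Real.cosh t) * Real.cosh ((ν+1) * t))
      + (x/2) * (Real.exp (-x * Real.cosh t) * Real.cosh ((ν-1) * t))
      + ν * (Real.exp (-x * Real.cosh t) * Real.cosh (ν * t)) with hf'def
  have hderiv : ∀ t : ℝ, HasDerivAt f (f' t) t := by
    intro t
    have h1 : HasDerivAt (fun t : ℝ => -x * Real.cosh t) (-x * Real.sinh t) t :=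
      (Real.hasDerivAt_cosh t).const_mul (-x)
    have h2 := h1.exp
    have h3 : HasDerivAt (fun t : ℝ => Real.sinh (ν * t)) (Real.cosh (ν * t) * ν) t :=
      (Real.hasDerivAt_sinh (ν * t)).comp t ((hasDerivAt_id t).const_mul ν |>.congr_deriv
        (by ring))
    have h4 := h2.mul h3
    refine h4.congr_deriv (Eq.symm ?_)
    have hs := sinh_mul_sinh' (ν * t) t
    rw [show ν * t + t = (ν+1)*t by ring, show ν * t - t = (ν-1)*t by ring] at hs
    simp only [hf'def]
    linear_combination x * Real.exp (-x * Real.cosh t) * hs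
  have hint : MeasureTheory.IntegrableOn f' (Set.Ioi 0) := by
    exact (((integrableK x (ν+1) hx).restrict.const_mul _).add
      ((integrableK x (ν-1) hx).restrict.const_mul _)).add
      ((integrableK x ν hx).restrict.const_mul _)
  have h0 : ∫ t in Set.Ioi (0:ℝ), f' t = 0 - f 0 :=
    MeasureTheory.integral_Ioi_of_hasDerivAt_of_tendsto
      (hderiv 0).continuousAt.continuousWithinAt (fun t _ => hderiv t) hint
      (tendsto_bessel_aux x ν hx)
  have hf0 : f 0 = 0 := by simp [hfdef]
  rw [hf0, sub_zero] at h0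
  have hsplit : ∫ t in Set.Ioi (0:ℝ), f' t
      = (-x/2) * besselK (ν+1) x + (x/2) * besselK (ν-1) x + ν * besselK ν x := by
    simp only [hf'def]
    have i1 : MeasureTheory.Integrable
        (fun t : ℝ => (-x/2) * (Real.exp (-x * Real.cosh t) * Real.cosh ((ν+1) * t)))
        (MeasureTheory.volume.restrict (Set.Ioi 0)) :=
      (integrableK x (ν+1) hx).restrict.const_mul _
    have i2 : MeasureTheory.Integrable
        (fun t : ℝ => (x/2) * (Real.exp (-x * Real.cosh t) * Real.cosh ((ν-1) * t)))
        (MeasureTheory.volume.restrict (Set.Ioi 0)) :=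
      (integrableK x (ν-1) hx).restrict.const_mul _
    have i3 : MeasureTheory.Integrable
        (fun t : ℝ => ν * (Real.exp (-x * Real.cosh t) * Real.cosh (ν * t)))
        (MeasureTheory.volume.restrict (Set.Ioi 0)) :=
      (integrableK x ν hx).restrict.const_mul _
    have i12 : MeasureTheory.Integrable
        (fun t : ℝ => (-x/2) * (Real.exp (-x * Real.cosh t) * Real.cosh ((ν+1) * t))
          + (x/2) * (Real.exp (-x * Real.cosh t) * Real.cosh ((ν-1) * t)))
        (MeasureTheory.volume.restrict (Set.Ioi 0)) := i1.add i2
    rw [MeasureTheory.integral_add i12 i3, MeasureTheory.integral_add i1 i2,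
      MeasureTheory.integral_const_mul, MeasureTheory.integral_const_mul,
      MeasureTheory.integral_const_mul]
    rfl
  rw [hsplit] at h0
  field_simp
  linarith

lemma hasDerivAt_rpow_besselK (ν x : ℝ) (hx : 0 < x) :
    HasDerivAt (fun y : ℝ => y ^ ν * besselK ν y) (-(x ^ ν * besselK (ν - 1) x)) x := by
  have h1 : HasDerivAt (fun y : ℝ => y ^ ν) (ν * x ^ (ν - 1)) x :=
    Real.hasDerivAt_rpow_const (Or.inl hx.ne')
  have h3 := h1.mul (hasDerivAt_besselK ν x hx)
  refine h3.congr_deriv (Eq.symm ?_)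
  have hrec := besselK_recurrence ν x hx
  have hx1 : x ^ (ν - 1) = x ^ ν / x := by
    rw [Real.rpow_sub hx, Real.rpow_one]
  rw [hx1]
  have hxne : x ≠ 0 := hx.ne'
  linear_combination (x ^ ν / 2) * hrec

lemma hasDerivAt_P (κ ν s : ℝ) (hκ : 0 < κ) (hs : 0 < s) :
    HasDerivAt (fun u : ℝ => (κ * Real.sqrt u) ^ ν * besselK ν (κ * Real.sqrt u))
      (-(κ ^ 2 / 2) * ((κ * Real.sqrt s) ^ (ν - 1) * besselK (ν - 1) (κ * Real.sqrt s))) s := by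
  have hss : Real.sqrt s ≠ 0 := by positivity
  have hr : 0 < κ * Real.sqrt s := by positivity
  have hlin : HasDerivAt (fun u : ℝ => κ * Real.sqrt u) (κ * (1 / (2 * Real.sqrt s))) s :=
    (Real.hasDerivAt_sqrt hs.ne').const_mul κ
  have hcomp := (hasDerivAt_rpow_besselK ν (κ * Real.sqrt s) hr).comp s hlin
  refine hcomp.congr_deriv (Eq.symm ?_)
  have : (κ * Real.sqrt s) ^ ν = (κ * Real.sqrt s) ^ (ν - 1) * (κ * Real.sqrt s) := by
    rw [show ν = (ν - 1) + 1 by ring, Real.rpow_add hr, Real.rpow_one]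
    ring_nf
  rw [this]
  field_simp

lemma const_step (κ φ μ : ℝ) (hκ : 0 < κ) (hμ : 0 < μ) :
    2 ^ (1 - μ) * φ ^ 2 / (4 * π * Real.Gamma (μ + 1) * κ ^ (2 * μ)) * κ ^ 2
      = 2 ^ (1 - (μ - 1)) * φ ^ 2 / (4 * π * Real.Gamma (μ - 1 + 1) * κ ^ (2 * (μ - 1)))
        / (2 * μ) := by
  have hG : Real.Gamma (μ + 1) = μ * Real.Gamma μ := Real.Gamma_add_one hμ.ne'
  have hG2 : Real.Gamma (μ - 1 + 1) = Real.Gamma μ := by norm_num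
  have hk1 : κ ^ (2 * μ) = κ ^ (2 * (μ - 1)) * κ ^ 2 := by
    rw [← Real.rpow_two, ← Real.rpow_add hκ]
    ring_nf
  have h21 : (2:ℝ) ^ (1 - (μ - 1)) = 2 * 2 ^ (1 - μ) := by
    rw [show (1:ℝ) - (μ - 1) = 1 + (1 - μ) by ring, Real.rpow_add (by norm_num),
      Real.rpow_one]
  rw [hG, hG2, hk1, h21]
  have hGpos : 0 < Real.Gamma μ := Real.Gamma_pos_of_pos hμ
  have hkp : (0:ℝ) < κ ^ (2 * (μ - 1)) := Real.rpow_pos_of_pos hκ _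
  have hπ : (0:ℝ) < π := Real.pi_pos
  field_simp

lemma matern_hasFDerivAt (κ φ μ : ℝ) (hκ : 0 < κ) (z : EuclideanSpace ℝ (Fin 2))
    (hz : z ≠ 0) :
    HasFDerivAt (matern κ φ μ)
      ((2 ^ (1 - μ) * φ ^ 2 / (4 * π * Real.Gamma (μ + 1) * κ ^ (2 * μ)) *
        (-(κ ^ 2 / 2) * ((κ * ‖z‖) ^ (μ - 1) * besselK (μ - 1) (κ * ‖z‖)))) •
        (2 • (innerSL ℝ z))) z := by
  have hq : HasFDerivAt (fun y : EuclideanSpace ℝ (Fin 2) => ‖y‖ ^ 2)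
      ((2:ℕ) • innerSL ℝ z) z := (hasStrictFDerivAt_norm_sq z).hasFDerivAt
  have hzn : (0:ℝ) < ‖z‖ := norm_pos_iff.mpr hz
  have hs : (0:ℝ) < ‖z‖ ^ 2 := by positivity
  have hP := ((hasDerivAt_P κ μ (‖z‖ ^ 2) hκ hs).comp_hasFDerivAt z hq).const_mul
    (2 ^ (1 - μ) * φ ^ 2 / (4 * π * Real.Gamma (μ + 1) * κ ^ (2 * μ)))
  have hfun : matern κ φ μ = fun y : EuclideanSpace ℝ (Fin 2) =>
      2 ^ (1 - μ) * φ ^ 2 / (4 * π * Real.Gamma (μ + 1) * κ ^ (2 * μ)) *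
        ((fun u : ℝ => (κ * Real.sqrt u) ^ μ * besselK μ (κ * Real.sqrt u)) ∘
          (fun y : EuclideanSpace ℝ (Fin 2) => ‖y‖ ^ 2)) y := by
    funext y
    simp only [Function.comp, matern, Real.sqrt_sq (norm_nonneg y)]
    ring
  rw [hfun]
  rw [Real.sqrt_sq (norm_nonneg z), smul_smul] at hP
  exact hP

lemma pderiv_matern (κ φ μ : ℝ) (hκ : 0 < κ) (j : Fin 2) (z : EuclideanSpace ℝ (Fin 2))
    (hz : z ≠ 0) :
    pderiv2 j (matern κ φ μ) z
      = 2 ^ (1 - μ) * φ ^ 2 / (4 * π * Real.Gamma (μ + 1) * κ ^ (2 * μ)) *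
        (-(κ ^ 2) * ((κ * ‖z‖) ^ (μ - 1) * besselK (μ - 1) (κ * ‖z‖))) * z j := by
  unfold pderiv2
  rw [(matern_hasFDerivAt κ φ μ hκ z hz).fderiv]
  simp only [ContinuousLinearMap.smul_apply, smul_eq_mul, innerSL_apply_apply,
    EuclideanSpace.inner_single_right, conj_trivial, mul_one]
  ring

lemma pderiv_pderiv_matern (κ φ ν : ℝ) (hκ : 0 < κ) (i j : Fin 2)
    (h : EuclideanSpace ℝ (Fin 2)) (hh : h ≠ 0) :
    pderiv2 i (pderiv2 j (matern κ φ ν)) h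
      = 2 ^ (1 - ν) * φ ^ 2 / (4 * π * Real.Gamma (ν + 1) * κ ^ (2 * ν)) * (-(κ ^ 2)) *
          (((κ * ‖h‖) ^ (ν - 1) * besselK (ν - 1) (κ * ‖h‖)) * (if i = j then 1 else 0)
            + h j * ((-(κ ^ 2 / 2) *
              ((κ * ‖h‖) ^ (ν - 1 - 1) * besselK (ν - 1 - 1) (κ * ‖h‖))) * (2 * h i))) := by
  classical
  set C : ℝ := 2 ^ (1 - ν) * φ ^ 2 / (4 * π * Real.Gamma (ν + 1) * κ ^ (2 * ν)) * (-(κ ^ 2))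
    with hC
  set G : EuclideanSpace ℝ (Fin 2) → ℝ := fun z =>
    C * (((κ * Real.sqrt (‖z‖ ^ 2)) ^ (ν - 1) *
      besselK (ν - 1) (κ * Real.sqrt (‖z‖ ^ 2))) * z j) with hG
  have heq : pderiv2 j (matern κ φ ν) =ᶠ[nhds h] G := by
    filter_upwards [isOpen_compl_singleton.mem_nhds hh] with z hz0
    rw [pderiv_matern κ φ ν hκ j z hz0, hG]
    simp only [Real.sqrt_sq (norm_nonneg z)]
    ring
  have hzn : (0:ℝ) < ‖h‖ := norm_pos_iff.mpr hh
  have hs : (0:ℝ) < ‖h‖ ^ 2 := by positivity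
  have hq : HasFDerivAt (fun y : EuclideanSpace ℝ (Fin 2) => ‖y‖ ^ 2)
      ((2:ℕ) • innerSL ℝ h) h := (hasStrictFDerivAt_norm_sq h).hasFDerivAt
  have hF : HasFDerivAt
      (fun z : EuclideanSpace ℝ (Fin 2) =>
        (κ * Real.sqrt (‖z‖ ^ 2)) ^ (ν - 1) * besselK (ν - 1) (κ * Real.sqrt (‖z‖ ^ 2)))
      ((-(κ ^ 2 / 2) * ((κ * Real.sqrt (‖h‖ ^ 2)) ^ (ν - 1 - 1) *
        besselK (ν - 1 - 1) (κ * Real.sqrt (‖h‖ ^ 2)))) • ((2:ℕ) • innerSL ℝ h)) h :=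
    by have := (hasDerivAt_P κ (ν - 1) (‖h‖ ^ 2) hκ hs).comp_hasFDerivAt h hq; exact this
  have hproj : HasFDerivAt (fun z : EuclideanSpace ℝ (Fin 2) => z j)
      (EuclideanSpace.proj j : EuclideanSpace ℝ (Fin 2) →L[ℝ] ℝ) h :=
    (EuclideanSpace.proj j : EuclideanSpace ℝ (Fin 2) →L[ℝ] ℝ).hasFDerivAt
  have hGF : HasFDerivAt G (C • ((((κ * Real.sqrt (‖h‖ ^ 2)) ^ (ν - 1) *
      besselK (ν - 1) (κ * Real.sqrt (‖h‖ ^ 2)))) • (EuclideanSpace.proj j :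
        EuclideanSpace ℝ (Fin 2) →L[ℝ] ℝ)
      + h j • ((-(κ ^ 2 / 2) * ((κ * Real.sqrt (‖h‖ ^ 2)) ^ (ν - 1 - 1) *
        besselK (ν - 1 - 1) (κ * Real.sqrt (‖h‖ ^ 2)))) • ((2:ℕ) • innerSL ℝ h)))) h :=
    (hF.mul hproj).const_mul C
  show fderiv ℝ (pderiv2 j (matern κ φ ν)) h (EuclideanSpace.single i 1) = _
  rw [heq.fderiv_eq, hGF.fderiv]
  simp only [ContinuousLinearMap.smul_apply, ContinuousLinearMap.add_apply,
    smul_eq_mul, innerSL_apply_apply, EuclideanSpace.inner_single_right, conj_trivial,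
    PiLp.proj_apply, EuclideanSpace.single_apply,
    Real.sqrt_sq (norm_nonneg h), mul_one]
  rw [show (if i = j then (1:ℝ) else 0) = (if j = i then (1:ℝ) else 0) by
    simp [eq_comm]]
  ring


/-- The covariance function of the simplest nested SPDE model (Example 2): applying the
operator `b − ∇^⊤BB^⊤∇` to the Matérn covariance gives
`b·C_κ^ν(h) + (⟨B,B⟩/(2ν))·C_κ^{ν−1}(h) − (⟨B,h⟩²/(4ν(ν−1)))·C_κ^{ν−2}(h)`. -/
theorem matern_second_directional (κ φ ν b : ℝ) (hκ : 0 < κ) (hφ : 0 < φ) (hν : 2 < ν)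
    (B : EuclideanSpace ℝ (Fin 2)) (h : EuclideanSpace ℝ (Fin 2)) (hh : h ≠ 0) :
    b * matern κ φ ν h
        - ∑ i : Fin 2, ∑ j : Fin 2, B i * B j * pderiv2 i (pderiv2 j (matern κ φ ν)) h
      = b * matern κ φ ν h + (inner ℝ B B : ℝ) / (2 * ν) * matern κ φ (ν - 1) h
        - (inner ℝ B h : ℝ) ^ 2 / (4 * ν * (ν - 1)) * matern κ φ (ν - 2) h := by
  have hν0 : (0:ℝ) < ν := by linarith
  have hν1 : (0:ℝ) < ν - 1 := by linarith
  have hd := fun i j => pderiv_pderiv_matern κ φ ν hκ i j h hh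
  rw [Fin.sum_univ_two, Fin.sum_univ_two, Fin.sum_univ_two]
  rw [hd 0 0, hd 0 1, hd 1 0, hd 1 1]
  have hBB : (inner ℝ B B : ℝ) = B 0 * B 0 + B 1 * B 1 := by
    rw [PiLp.inner_apply]
    simp [PiLp.inner_apply, Fin.sum_univ_two, RCLike.inner_apply, conj_trivial]
    ring
  have hBh : (inner ℝ B h : ℝ) = B 0 * h 0 + B 1 * h 1 := by
    simp [PiLp.inner_apply, Fin.sum_univ_two, RCLike.inner_apply, conj_trivial]
    ring
  rw [hBB, hBh]
  have hne : ν ≠ 0 := hν0.ne'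
  have hne1 : ν - 1 ≠ 0 := hν1.ne'
  have k1 := const_step κ φ ν hκ hν0
  have k2 := const_step κ φ (ν - 1) hκ hν1
  rw [show ν - 1 - 1 = ν - 2 from by ring] at k2 ⊢
  have hA : (0:ℝ) < 2 ^ (1 - (ν-1)) * φ ^ 2 /
      (4 * π * Real.Gamma (ν - 1 + 1) * κ ^ (2 * (ν-1))) := by
    have := Real.Gamma_pos_of_pos (show (0:ℝ) < ν - 1 + 1 by linarith)
    have h2 : (0:ℝ) < (2:ℝ) ^ (1 - (ν-1)) := Real.rpow_pos_of_pos (by norm_num) _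
    have h3 : (0:ℝ) < κ ^ (2 * (ν-1)) := Real.rpow_pos_of_pos hκ _
    have hπ := Real.pi_pos
    positivity
  have e1 : 2 ^ (1 - (ν-1)) * φ ^ 2 / (4 * π * Real.Gamma (ν - 1 + 1) * κ ^ (2 * (ν-1)))
      = 2 * ν * (2 ^ (1 - ν) * φ ^ 2 / (4 * π * Real.Gamma (ν + 1) * κ ^ (2 * ν)) * κ ^ 2) := by
    have h2 : (2:ℝ) * ν ≠ 0 := by positivity
    rw [k1, ← mul_div_assoc, mul_div_cancel_left₀ _ h2]
  have e2 : 2 ^ (1 - (ν-2)) * φ ^ 2 / (4 * π * Real.Gamma (ν - 2 + 1) * κ ^ (2 * (ν-2)))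
      = 2 * (ν - 1) * (2 ^ (1 - (ν-1)) * φ ^ 2 /
        (4 * π * Real.Gamma (ν - 1 + 1) * κ ^ (2 * (ν-1))) * κ ^ 2) := by
    have h2 : (2:ℝ) * (ν - 1) ≠ 0 := by positivity
    rw [k2, ← mul_div_assoc, mul_div_cancel_left₀ _ h2]
  unfold matern
  rw [e2, e1]
  field_simp
  simp only [Fin.reduceEq, ↓reduceIte]
  ring
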